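/- Let α, σ be schedulers, t ∈ (0,1), γ̄ ∈ ℝ, σ̄₀ > 0, and let p_data be a probability density on ℝ^d with compact support. Define μ = (α_t, γ̄α_t)ᵀ and Σ = [[σ_t², γ̄σ_t²], [γ̄σ_t², σ̄₀² + γ̄²σ_t²]]. Then for every x_t ∈ ℝ^d with p_t(x_t) > 0 and every x̄ ∈ ℝ^d, the GLASS posterior p(z | x_t, x̄) associated to (μ, Σ) equals the standard posterior p_{1|t}(z | x_t), and consequently the GLASS denoiser satisfies D_{μ,Σ}(x_t, x̄) = D_t(x_t); that is, a second measurement of the form γ̄x_t + σ̄₀ε is uninformative about z and the GLASS denoiser at inner time s = 0 reduces to the standard denoiser. -/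
import Mathlib


open MeasureTheory Real Matrix
open scoped BigOperators

noncomputable def gauss1 (y m v : ℝ) : ℝ :=
  (2 * Real.pi * v) ^ (-(1:ℝ)/2) * Real.exp (-(y - m)^2 / (2 * v))

noncomputable def gauss2 (x m : Fin 2 → ℝ) (S : Matrix (Fin 2) (Fin 2) ℝ) : ℝ :=
  (2 * Real.pi)⁻¹ * S.det ^ (-(1:ℝ)/2) *
    Real.exp (-(1/2) * ((x - m) ⬝ᵥ (S⁻¹ *ᵥ (x - m))))

noncomputable def suffStat (μ : Fin 2 → ℝ) (S : Matrix (Fin 2) (Fin 2) ℝ)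
    (x : Fin 2 → ℝ) : ℝ :=
  (μ ⬝ᵥ (S⁻¹ *ᵥ x)) / (μ ⬝ᵥ (S⁻¹ *ᵥ μ))

structure IsScheduler (α σ : ℝ → ℝ) : Prop where
  contDiff_a : ContDiffOn ℝ 1 α (Set.Icc 0 1)
  contDiff_s : ContDiffOn ℝ 1 σ (Set.Icc 0 1)
  a0 : α 0 = 0
  a1 : α 1 = 1
  s0 : σ 0 = 1
  s1 : σ 1 = 0
  mono_a : StrictMonoOn α (Set.Icc 0 1)
  anti_s : StrictAntiOn σ (Set.Icc 0 1)

def IsProbDensity {d : ℕ} (p : (Fin d → ℝ) → ℝ) : Prop :=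
  Measurable p ∧ (∀ z, 0 ≤ p z) ∧ (∫ z, p z) = 1

noncomputable def marginal {d : ℕ} (α σ : ℝ → ℝ) (p : (Fin d → ℝ) → ℝ)
    (t : ℝ) (x : Fin d → ℝ) : ℝ :=
  ∫ z, (∏ j, gauss1 (x j) (α t * z j) ((σ t)^2)) * p z

noncomputable def post {d : ℕ} (α σ : ℝ → ℝ) (p : (Fin d → ℝ) → ℝ)
    (t : ℝ) (z x : Fin d → ℝ) : ℝ :=
  (∏ j, gauss1 (x j) (α t * z j) ((σ t)^2)) * p z / marginal α σ p t x

noncomputable def denoiser {d : ℕ} (α σ : ℝ → ℝ) (p : (Fin d → ℝ) → ℝ)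
    (t : ℝ) (x : Fin d → ℝ) : Fin d → ℝ :=
  ∫ z, post α σ p t z x • z

noncomputable def glassLik {d : ℕ} (μ : Fin 2 → ℝ) (S : Matrix (Fin 2) (Fin 2) ℝ)
    (x1 x2 z : Fin d → ℝ) : ℝ :=
  ∏ j, gauss2 ![x1 j, x2 j] (z j • μ) S

noncomputable def glassZ {d : ℕ} (μ : Fin 2 → ℝ) (S : Matrix (Fin 2) (Fin 2) ℝ)
    (p : (Fin d → ℝ) → ℝ) (x1 x2 : Fin d → ℝ) : ℝ :=
  ∫ w, glassLik μ S x1 x2 w * p w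

noncomputable def glassPost {d : ℕ} (μ : Fin 2 → ℝ) (S : Matrix (Fin 2) (Fin 2) ℝ)
    (p : (Fin d → ℝ) → ℝ) (x1 x2 z : Fin d → ℝ) : ℝ :=
  glassLik μ S x1 x2 z * p z / glassZ μ S p x1 x2

noncomputable def glassDenoiser {d : ℕ} (μ : Fin 2 → ℝ) (S : Matrix (Fin 2) (Fin 2) ℝ)
    (p : (Fin d → ℝ) → ℝ) (x1 x2 : Fin d → ℝ) : Fin d → ℝ :=
  ∫ z, glassPost μ S p x1 x2 z • z


lemma inv_S (γb σt σ0 : ℝ) (hσt : σt ≠ 0) (hσ0 : σ0 ≠ 0) :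
    (!![σt^2, γb*σt^2; γb*σt^2, σ0^2+γb^2*σt^2] : Matrix (Fin 2) (Fin 2) ℝ)⁻¹
    = !![(σ0^2+γb^2*σt^2)/(σt^2*σ0^2), -γb/σ0^2; -γb/σ0^2, 1/σ0^2] := by
  apply Matrix.inv_eq_right_inv
  ext i j
  fin_cases i <;> fin_cases j <;>
    simp [Matrix.mul_apply, Fin.sum_univ_two, Matrix.one_apply] <;>
    field_simp <;> ring

lemma key (a b z αt γb σt σ0 : ℝ) (hσt : 0 < σt) (hσ0 : 0 < σ0) :
    gauss2 ![a, b] (z • ![αt, γb * αt])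
      !![σt^2, γb*σt^2; γb*σt^2, σ0^2+γb^2*σt^2]
    = gauss1 a (αt * z) (σt^2) * gauss1 b (γb * a) (σ0^2) := by
  have hst : (σt:ℝ)^2 ≠ 0 := by positivity
  have hs0 : (σ0:ℝ)^2 ≠ 0 := by positivity
  have hdet : (!![σt^2, γb*σt^2; γb*σt^2, σ0^2+γb^2*σt^2] : Matrix (Fin 2) (Fin 2) ℝ).det
      = σt^2 * σ0^2 := by
    simp [Matrix.det_fin_two_of]; ring
  rw [gauss2, gauss1, gauss1, hdet, inv_S γb σt σ0 hσt.ne' hσ0.ne']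
  have hQ : ((![a, b] - z • ![αt, γb * αt]) ⬝ᵥ
      ((!![(σ0^2+γb^2*σt^2)/(σt^2*σ0^2), -γb/σ0^2; -γb/σ0^2, 1/σ0^2] : Matrix (Fin 2) (Fin 2) ℝ)
        *ᵥ (![a, b] - z • ![αt, γb * αt])))
      = (a - αt*z)^2/σt^2 + (b - γb*a)^2/σ0^2 := by
    simp [Matrix.mulVec, dotProduct, Fin.sum_univ_two]
    field_simp
    ring
  rw [hQ]
  have h2pi : (0:ℝ) < 2 * Real.pi := by positivity
  have hnorm : (2 * Real.pi)⁻¹ * ((σt^2 * σ0^2) ^ (-(1:ℝ)/2))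
      = (2 * Real.pi * σt^2) ^ (-(1:ℝ)/2) * (2 * Real.pi * σ0^2) ^ (-(1:ℝ)/2) := by
    have e1 : (2 * Real.pi * σt^2) ^ (-(1:ℝ)/2)
        = (2 * Real.pi) ^ (-(1:ℝ)/2) * (σt^2) ^ (-(1:ℝ)/2) :=
      Real.mul_rpow (le_of_lt h2pi) (sq_nonneg _)
    have e2 : (2 * Real.pi * σ0^2) ^ (-(1:ℝ)/2)
        = (2 * Real.pi) ^ (-(1:ℝ)/2) * (σ0^2) ^ (-(1:ℝ)/2) :=
      Real.mul_rpow (le_of_lt h2pi) (sq_nonneg _)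
    have e3 : (σt^2 * σ0^2) ^ (-(1:ℝ)/2)
        = (σt^2) ^ (-(1:ℝ)/2) * (σ0^2) ^ (-(1:ℝ)/2) :=
      Real.mul_rpow (sq_nonneg _) (sq_nonneg _)
    have e4 : (2 * Real.pi) ^ (-(1:ℝ)/2) * (2 * Real.pi) ^ (-(1:ℝ)/2)
        = (2 * Real.pi)⁻¹ := by
      rw [← Real.rpow_add h2pi, show (-(1:ℝ)/2 + -(1:ℝ)/2) = -1 by norm_num,
        Real.rpow_neg_one]
    rw [e1, e2, e3, ← e4]; ring
  have hexp : Real.exp (-(1/2) * ((a - αt*z)^2/σt^2 + (b - γb*a)^2/σ0^2))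
      = Real.exp (-(a - αt*z)^2 / (2*σt^2)) * Real.exp (-(b - γb*a)^2 / (2*σ0^2)) := by
    rw [← Real.exp_add]; congr 1; field_simp; ring
  rw [hnorm, hexp]; ring
theorem stmt12 {d : ℕ} (α σ : ℝ → ℝ) (hsch : IsScheduler α σ)
    (t : ℝ) (ht : t ∈ Set.Ioo (0:ℝ) 1) (γb σ0 : ℝ) (hσ0 : 0 < σ0)
    (p : (Fin d → ℝ) → ℝ) (hp : IsProbDensity p) (hps : HasCompactSupport p)
    (μ : Fin 2 → ℝ) (hμ : μ = ![α t, γb * α t])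
    (S : Matrix (Fin 2) (Fin 2) ℝ)
    (hS : S = !![(σ t)^2, γb * (σ t)^2; γb * (σ t)^2, σ0^2 + γb^2 * (σ t)^2]) :
    ∀ xt : Fin d → ℝ, 0 < marginal α σ p t xt → ∀ xb : Fin d → ℝ,
      (∀ z : Fin d → ℝ, glassPost μ S p xt xb z = post α σ p t z xt) ∧
      glassDenoiser μ S p xt xb = denoiser α σ p t xt := by
  subst hμ hS
  obtain ⟨ht0, ht1⟩ := ht
  have hσt : 0 < σ t := by
    have h := hsch.anti_s ⟨le_of_lt ht0, le_of_lt ht1⟩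
      ⟨zero_le_one, le_refl 1⟩ ht1
    rw [hsch.s1] at h
    exact h
  intro xt hM xb
  set C : ℝ := ∏ j, gauss1 (xb j) (γb * xt j) (σ0^2) with hCdef
  have hlik : ∀ z : Fin d → ℝ,
      glassLik ![α t, γb * α t]
        !![(σ t)^2, γb * (σ t)^2; γb * (σ t)^2, σ0^2 + γb^2 * (σ t)^2] xt xb z
      = (∏ j, gauss1 (xt j) (α t * z j) ((σ t)^2)) * C := by
    intro z
    rw [glassLik, hCdef, ← Finset.prod_mul_distrib]
    refine Finset.prod_congr rfl fun j _ => ?_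
    exact key (xt j) (xb j) (z j) (α t) γb (σ t) σ0 hσt hσ0
  have hC : 0 < C := by
    refine Finset.prod_pos fun j _ => ?_
    rw [gauss1]
    have : (0:ℝ) < 2 * Real.pi * σ0^2 := by positivity
    positivity
  have hZ : glassZ ![α t, γb * α t]
      !![(σ t)^2, γb * (σ t)^2; γb * (σ t)^2, σ0^2 + γb^2 * (σ t)^2] p xt xb
      = C * marginal α σ p t xt := by
    rw [glassZ, marginal, ← MeasureTheory.integral_const_mul]
    refine integral_congr_ae (Filter.Eventually.of_forall fun w => ?_)
    simp only [hlik w]; ring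
  have hpost : ∀ z : Fin d → ℝ,
      glassPost ![α t, γb * α t]
        !![(σ t)^2, γb * (σ t)^2; γb * (σ t)^2, σ0^2 + γb^2 * (σ t)^2] p xt xb z
      = post α σ p t z xt := by
    intro z
    rw [glassPost, post, hlik z, hZ,
      show (∏ j, gauss1 (xt j) (α t * z j) ((σ t)^2)) * C * p z
        = C * ((∏ j, gauss1 (xt j) (α t * z j) ((σ t)^2)) * p z) by ring,
      mul_div_mul_left _ _ hC.ne']
  refine ⟨hpost, ?_⟩
  rw [glassDenoiser, denoiser]
  congr 1
  funext z
  rw [hpost z]
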